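/- Let G be a directed graph on the vertex set V = {pairs {i,j} ⊆ [k]} satisfying the triangular substructure property: for every triple of distinct indices j, j', j'', either {j,j''} ↔ {j',j''} (both directions), or {j,j'} → {j,j''}, or {j,j'} → {j',j''}. Then for any r ≥ 1, the number of vertices of G with in-degree less than r is at most 3kr. -/

import Mathlib

open Classical in
/-- If a digraph on the 2-element subsets of `[k]` has the triangular substructure
property, then for every real `r ≥ 1` there are at most `3 k r` vertices of
in-degree less than `r`. -/
theorem stmt_6 (k : ℕ) (E : Finset (Fin k) → Finset (Fin k) → Prop)
    (htri : ∀ a b c : Fin k, a ≠ b → a ≠ c → b ≠ c →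
      (E {a, c} {b, c} ∧ E {b, c} {a, c}) ∨ E {a, b} {a, c} ∨ E {a, b} {b, c})
    (r : ℝ) (hr : 1 ≤ r) :
    (((Finset.univ.filter (fun s : Finset (Fin k) => s.card = 2)).filter
        (fun v =>
          ((((Finset.univ.filter (fun s : Finset (Fin k) => s.card = 2)).filter
            (fun u => E u v)).card : ℝ) < r))).card : ℝ) ≤ 3 * k * r := by
  classical
  set V2 : Finset (Finset (Fin k)) :=
    Finset.univ.filter (fun s : Finset (Fin k) => s.card = 2) with hV2
  set L : Finset (Finset (Fin k)) :=
    V2.filter (fun v => (((V2.filter (fun u => E u v)).card : ℝ) < r)) with hL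
  -- basic facts
  have hmemL : ∀ v ∈ L, v.card = 2 ∧ ((V2.filter (fun u => E u v)).card : ℝ) < r := by
    intro v hv
    rw [hL, Finset.mem_filter] at hv
    refine ⟨?_, hv.2⟩
    have := hv.1
    rw [hV2, Finset.mem_filter] at this
    exact this.2
  have hpairV2 : ∀ a b : Fin k, a ≠ b → ({a, b} : Finset (Fin k)) ∈ V2 := by
    intro a b hab
    rw [hV2, Finset.mem_filter]
    exact ⟨Finset.mem_univ _, Finset.card_pair hab⟩
  have mem_pair_elim : ∀ {x z w : Fin k} {s : Finset (Fin k)},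
      s = ({z, w} : Finset (Fin k)) → x ∈ s → x = z ∨ x = w := by
    intro x z w s hs hx
    rw [hs] at hx
    simpa using hx
  -- Lemma A: for a low vertex {a,b}, the number of c with no double edge
  -- between {a,c} and {b,c} is less than r.
  have lemA : ∀ a b : Fin k, a ≠ b → ({a, b} : Finset (Fin k)) ∈ L →
      (((Finset.univ.filter (fun c : Fin k =>
          c ≠ a ∧ c ≠ b ∧ ¬(E {a, c} {b, c} ∧ E {b, c} {a, c}))).card : ℝ) < r) := by
    intro a b hab hmem
    refine lt_of_le_of_lt ?_ (hmemL _ hmem).2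
    have hle : (Finset.univ.filter (fun c : Fin k =>
          c ≠ a ∧ c ≠ b ∧ ¬(E {a, c} {b, c} ∧ E {b, c} {a, c}))).card
        ≤ (V2.filter (fun u => E u ({a, b} : Finset (Fin k)))).card := by
      apply Finset.card_le_card_of_injOn
        (fun c => if E {a, c} {a, b} then ({a, c} : Finset (Fin k)) else {b, c})
      · intro c hc
        simp only [Finset.mem_coe, Finset.mem_filter, Finset.mem_univ, true_and] at hc
        obtain ⟨hca, hcb, hnd⟩ := hc
        have h1 := htri a c b (Ne.symm hca) hab hcb
        have h2 := htri b c a (Ne.symm hcb) (Ne.symm hab) hca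
        rw [Finset.pair_comm c b] at h1
        rw [Finset.pair_comm b a, Finset.pair_comm c a] at h2
        have hor : E {a, c} {a, b} ∨ E {b, c} {a, b} := by tauto
        by_cases hE : E {a, c} {a, b}
        · simp only [if_pos hE]
          exact Finset.mem_filter.mpr ⟨hpairV2 a c (Ne.symm hca), hE⟩
        · simp only [if_neg hE]
          exact Finset.mem_filter.mpr ⟨hpairV2 b c (Ne.symm hcb), hor.resolve_left hE⟩
      · intro c hc c' hc' h
        simp only [Finset.coe_filter, Finset.mem_univ, true_and, Set.mem_setOf_eq] at hc hc'
        obtain ⟨hca, hcb, -⟩ := hc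
        obtain ⟨hc'a, hc'b, -⟩ := hc'
        dsimp only at h
        split_ifs at h with h1 h2 h3
        · rcases mem_pair_elim h (by simp : c ∈ ({a, c} : Finset (Fin k))) with h' | h'
          · exact absurd h' hca
          · exact h'
        · rcases mem_pair_elim h (by simp : a ∈ ({a, c} : Finset (Fin k))) with h' | h'
          · exact absurd h' hab
          · exact absurd h'.symm hc'a
        · rcases mem_pair_elim h (by simp : b ∈ ({b, c} : Finset (Fin k))) with h' | h'
          · exact absurd h'.symm hab
          · exact absurd h'.symm hc'b
        · rcases mem_pair_elim h (by simp : c ∈ ({b, c} : Finset (Fin k))) with h' | h'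
          · exact absurd h' hcb
          · exact h'
    exact_mod_cast hle
  -- Lemma B: in-edges into a low vertex {a,c} coming from vertices {b,c}.
  have lemB : ∀ a c : Fin k, c ≠ a → ({a, c} : Finset (Fin k)) ∈ L →
      (((Finset.univ.filter (fun b : Fin k =>
          b ≠ a ∧ b ≠ c ∧ E {b, c} {a, c})).card : ℝ) < r) := by
    intro a c hca hmem
    refine lt_of_le_of_lt ?_ (hmemL _ hmem).2
    have hle : (Finset.univ.filter (fun b : Fin k =>
          b ≠ a ∧ b ≠ c ∧ E {b, c} {a, c})).card
        ≤ (V2.filter (fun u => E u ({a, c} : Finset (Fin k)))).card := by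
      apply Finset.card_le_card_of_injOn (fun b => ({b, c} : Finset (Fin k)))
      · intro b hb
        simp only [Finset.mem_coe, Finset.mem_filter, Finset.mem_univ, true_and] at hb
        exact Finset.mem_filter.mpr ⟨hpairV2 b c hb.2.1, hb.2.2⟩
      · intro b hb b' hb' h
        simp only [Finset.coe_filter, Finset.mem_univ, true_and, Set.mem_setOf_eq] at hb hb'
        have h0 : ({b, c} : Finset (Fin k)) = {b', c} := h
        rcases mem_pair_elim h0 (by simp : b ∈ ({b, c} : Finset (Fin k))) with h' | h'
        · exact h'
        · exact absurd h' hb.2.1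
    exact_mod_cast hle
  -- Bound the number of low vertices containing a fixed index a.
  have hBa : ∀ a : Fin k,
      (((Finset.univ.filter (fun b : Fin k =>
          b ≠ a ∧ ({a, b} : Finset (Fin k)) ∈ L)).card : ℝ) ≤ 2 * r + 1) := by
    intro a
    set B : Finset (Fin k) :=
      Finset.univ.filter (fun b : Fin k => b ≠ a ∧ ({a, b} : Finset (Fin k)) ∈ L) with hB
    by_cases hn : B.card = 0
    · rw [hn]; push_cast; linarith
    have hn1 : (1 : ℝ) ≤ B.card := by
      exact_mod_cast Nat.one_le_iff_ne_zero.mpr hn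
    set Q : Fin k → Fin k → Prop :=
      fun b c => b ≠ c ∧ E {a, c} {b, c} ∧ E {b, c} {a, c} with hQ
    have hrow : ∀ b ∈ B, ((B.card : ℝ) - 1) ≤ ((B.filter (fun c => Q b c)).card : ℝ) + r := by
      intro b hb
      rw [hB, Finset.mem_filter] at hb
      obtain ⟨-, hba, hbL⟩ := hb
      have hbadlt := lemA a b (Ne.symm hba) hbL
      have hsub : B.erase b ⊆ (B.filter (fun c => Q b c)) ∪
          (Finset.univ.filter (fun c : Fin k =>
            c ≠ a ∧ c ≠ b ∧ ¬(E {a, c} {b, c} ∧ E {b, c} {a, c}))) := by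
        intro c hc
        rw [Finset.mem_erase] at hc
        obtain ⟨hcb, hcB⟩ := hc
        have hca : c ≠ a := by
          rw [hB, Finset.mem_filter] at hcB
          exact hcB.2.1
        by_cases hd : E {a, c} {b, c} ∧ E {b, c} {a, c}
        · exact Finset.mem_union.mpr (Or.inl (Finset.mem_filter.mpr
            ⟨hcB, Ne.symm hcb, hd.1, hd.2⟩))
        · exact Finset.mem_union.mpr (Or.inr (Finset.mem_filter.mpr
            ⟨Finset.mem_univ _, hca, hcb, hd⟩))
      have hcard := (Finset.card_le_card hsub).trans (Finset.card_union_le _ _)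
      have herase : (B.erase b).card + 1 = B.card := by
        apply Finset.card_erase_add_one
        rw [hB, Finset.mem_filter]
        exact ⟨Finset.mem_univ _, hba, hbL⟩
      have hcard' : ((B.erase b).card : ℝ) ≤
          ((B.filter (fun c => Q b c)).card : ℝ) +
          ((Finset.univ.filter (fun c : Fin k =>
            c ≠ a ∧ c ≠ b ∧ ¬(E {a, c} {b, c} ∧ E {b, c} {a, c}))).card : ℝ) := by
        exact_mod_cast hcard
      have herase' : ((B.erase b).card : ℝ) + 1 = (B.card : ℝ) := by
        exact_mod_cast herase
      linarith
    have hcol : ∀ c ∈ B, ((B.filter (fun b => Q b c)).card : ℝ) ≤ r := by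
      intro c hc
      rw [hB, Finset.mem_filter] at hc
      obtain ⟨-, hca, hcL⟩ := hc
      have hlt := lemB a c hca hcL
      refine le_trans ?_ hlt.le
      have hsub : B.filter (fun b => Q b c) ⊆
          Finset.univ.filter (fun b : Fin k => b ≠ a ∧ b ≠ c ∧ E {b, c} {a, c}) := by
        intro b hb
        rw [Finset.mem_filter] at hb
        obtain ⟨hbB, hbc, -, hE2⟩ := hb
        have hba : b ≠ a := by
          rw [hB, Finset.mem_filter] at hbB
          exact hbB.2.1
        exact Finset.mem_filter.mpr ⟨Finset.mem_univ _, hba, hbc, hE2⟩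
      exact_mod_cast Finset.card_le_card hsub
    have hswap : (∑ b ∈ B, (B.filter (fun c => Q b c)).card) =
        ∑ c ∈ B, (B.filter (fun b => Q b c)).card := by
      simp only [Finset.card_filter]
      exact Finset.sum_comm
    have h1 : (B.card : ℝ) * ((B.card : ℝ) - 1) ≤
        (∑ b ∈ B, ((B.filter (fun c => Q b c)).card : ℝ)) + B.card * r := by
      have := Finset.sum_le_sum hrow
      rw [Finset.sum_const, Finset.sum_add_distrib, Finset.sum_const] at this
      simpa [nsmul_eq_mul] using this
    have h2 : (∑ b ∈ B, ((B.filter (fun c => Q b c)).card : ℝ)) =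
        ∑ c ∈ B, ((B.filter (fun b => Q b c)).card : ℝ) := by
      exact_mod_cast hswap
    have h3 : (∑ c ∈ B, ((B.filter (fun b => Q b c)).card : ℝ)) ≤ B.card * r := by
      have := Finset.sum_le_sum hcol
      rw [Finset.sum_const] at this
      simpa [nsmul_eq_mul] using this
    nlinarith [h1, h2, h3, hn1]
  -- double counting: each low vertex has exactly two indices
  have hfiber : ∀ a : Fin k, (L.filter (fun v => a ∈ v)).card =
      (Finset.univ.filter (fun b : Fin k =>
        b ≠ a ∧ ({a, b} : Finset (Fin k)) ∈ L)).card := by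
    intro a
    symm
    apply Finset.card_bij (fun b _ => ({a, b} : Finset (Fin k)))
    · intro b hb
      rw [Finset.mem_filter] at hb
      exact Finset.mem_filter.mpr ⟨hb.2.2, by simp⟩
    · intro b hb b' hb' h
      rw [Finset.mem_filter] at hb hb'
      have h0 : ({a, b} : Finset (Fin k)) = {a, b'} := h
      rcases mem_pair_elim h0 (by simp : b ∈ ({a, b} : Finset (Fin k))) with h' | h'
      · exact absurd h' hb.2.1
      · exact h'
    · intro v hv
      rw [Finset.mem_filter] at hv
      obtain ⟨hvL, hav⟩ := hv
      obtain ⟨x, y, hxy, hvxy⟩ := Finset.card_eq_two.mp (hmemL v hvL).1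
      rcases mem_pair_elim hvxy hav with h' | h'
      · refine ⟨y, ?_, ?_⟩
        · refine Finset.mem_filter.mpr ⟨Finset.mem_univ _, ?_, ?_⟩
          · rw [← h'] at hxy; exact hxy.symm
          · rw [← h'] at hvxy; rw [← hvxy]; exact hvL
        · rw [hvxy, h']
      · refine ⟨x, ?_, ?_⟩
        · refine Finset.mem_filter.mpr ⟨Finset.mem_univ _, ?_, ?_⟩
          · rw [← h'] at hxy; exact hxy
          · rw [← h', Finset.pair_comm] at hvxy; rw [← hvxy]; exact hvL
        · rw [hvxy, h', Finset.pair_comm]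
  have hsum : (∑ a : Fin k, (L.filter (fun v => a ∈ v)).card) = 2 * L.card := by
    simp only [Finset.card_filter]
    rw [Finset.sum_comm]
    have hcong : ∀ v ∈ L, (∑ a : Fin k, if a ∈ v then 1 else 0) = 2 := by
      intro v hv
      rw [← Finset.card_filter, Finset.filter_univ_mem]
      exact (hmemL v hv).1
    rw [Finset.sum_congr rfl hcong, Finset.sum_const, smul_eq_mul, mul_comm]
  -- put it together
  have hk0 : (0 : ℝ) ≤ (k : ℝ) := Nat.cast_nonneg k
  have hfinal : (2 * L.card : ℝ) ≤ k * (2 * r + 1) := by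
    have : ((∑ a : Fin k, (L.filter (fun v => a ∈ v)).card : ℕ) : ℝ) ≤ k * (2 * r + 1) := by
      push_cast
      calc (∑ a : Fin k, ((L.filter (fun v => a ∈ v)).card : ℝ))
          ≤ ∑ _a : Fin k, (2 * r + 1) := by
            apply Finset.sum_le_sum
            intro a _
            rw [hfiber a]
            exact hBa a
        _ = k * (2 * r + 1) := by
            rw [Finset.sum_const, nsmul_eq_mul]
            simp
    rw [hsum] at this
    exact_mod_cast this
  nlinarith [hfinal, hk0, hr]
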